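/- If the bottom element 0 is ∧-irreducible in the bounded lattice ℒ (i.e., c > 0 and d > 0 imply c ∧ d > 0), then the support of every DT-recognizable ℒ-fuzzy tree language is a DT-recognizable tree language. -/

import Mathlib

/-- Trees over a ranked alphabet `σ` (with arity map `ar`) and leaf alphabet `X`. -/
inductive FTree (σ : Type) (ar : σ → ℕ) (X : Type) : Type where
  | leaf : X → FTree σ ar X
  | node : (f : σ) → (Fin (ar f) → FTree σ ar X) → FTree σ ar X

/-- The path alphabet Γ: pairs (f, i) with i < arity of f. -/
abbrev PathSym (σ : Type) (ar : σ → ℕ) : Type := (f : σ) × Fin (ar f)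

variable {σ X : Type} {ar : σ → ℕ}

/-- The set of paths of a tree: words over Γ ending in a leaf symbol. -/
def FTree.paths : FTree σ ar X → Set (List (PathSym σ ar) × X)
  | .leaf x => {([], x)}
  | .node f ts => {p | ∃ (i : Fin (ar f)) (w : List (PathSym σ ar)) (x : X),
      p = (⟨f, i⟩ :: w, x) ∧ (w, x) ∈ (ts i).paths}

variable {A : Type}

/-- Action of a path word in a DT algebra. -/
def dtState (op : (f : σ) → A → Fin (ar f) → A) : List (PathSym σ ar) → A → A
  | [], a => a
  | ⟨f, i⟩ :: w, a => dtState op w (op f a i)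

/-- The fuzzy tree language computed by an L-DT recognizer from state `a`. -/
def phi {L : Type} [SemilatticeInf L] [OrderTop L]
    (op : (f : σ) → A → Fin (ar f) → A) (ω : X → A → L) : A → FTree σ ar X → L
  | a, .leaf x => ω x a
  | a, .node f ts => Finset.univ.inf fun i => phi op ω (op f a i) (ts i)

/-- Acceptance for an ordinary (crisp) DT recognizer: every leaf pair (x,b) of
the run from `a` satisfies b ∈ α x. -/
def dAccepts (op : (f : σ) → A → Fin (ar f) → A) (α : X → Set A) :
    A → FTree σ ar X → Prop
  | a, .leaf x => a ∈ α x
  | a, .node f ts => ∀ i, dAccepts op α (op f a i) (ts i)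

/-- A tree language is DT-recognizable if it is recognized by some finite
ordinary DT recognizer. -/
def DTRecLang {σ X : Type} {ar : σ → ℕ} (T : Set (FTree σ ar X)) : Prop :=
  ∃ (A : Type) (_ : Fintype A) (op : (f : σ) → A → Fin (ar f) → A)
    (a₀ : A) (α : X → Set A), T = {t | dAccepts op α a₀ t}

/-- An ℒ-fuzzy tree language is DT-recognizable if it is computed by some
finite ℒ-DT recognizer. -/
def DTRecFuzzy {σ X : Type} {ar : σ → ℕ} (L : Type) [Lattice L] [BoundedOrder L]
    (Φ : FTree σ ar X → L) : Prop :=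
  ∃ (A : Type) (_ : Fintype A) (op : (f : σ) → A → Fin (ar f) → A)
    (a₀ : A) (ω : X → A → L), ∀ t, Φ t = phi op ω a₀ t

lemma bot_lt_finset_inf {L : Type} [Lattice L] [BoundedOrder L]
    (hnt : (⊥ : L) ≠ ⊤) (hirr : ∀ c d : L, ⊥ < c → ⊥ < d → ⊥ < c ⊓ d)
    {ι : Type*} [DecidableEq ι] (s : Finset ι) (g : ι → L)
    (h : ∀ i ∈ s, ⊥ < g i) : ⊥ < s.inf g := by
  induction s using Finset.induction with
  | empty => simpa using hnt.lt_top
  | insert _ _ hx ih =>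
    rw [Finset.inf_insert]
    exact hirr _ _ (h _ (Finset.mem_insert_self _ _))
      (ih fun i hi => h i (Finset.mem_insert_of_mem hi))

/-- if ⊥ is ∧-irreducible in ℒ (c > ⊥ and d > ⊥ imply
c ⊓ d > ⊥), then the support of every DT-recognizable ℒ-fuzzy tree language
is a DT-recognizable tree language. -/
theorem support_dtrec_of_meet_irreducible {L : Type} [Lattice L] [BoundedOrder L]
    (hnt : (⊥ : L) ≠ ⊤) (har : ∀ f : σ, 1 ≤ ar f)
    (hirr : ∀ c d : L, ⊥ < c → ⊥ < d → ⊥ < c ⊓ d)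
    (Φ : FTree σ ar X → L) (hΦ : DTRecFuzzy L Φ) :
    DTRecLang {t | ⊥ < Φ t} := by
  obtain ⟨A, hA, op, a₀, ω, hω⟩ := hΦ
  refine ⟨A, hA, op, a₀, fun x => {a | ⊥ < ω x a}, ?_⟩
  have key : ∀ (t : FTree σ ar X) (a : A),
      (⊥ < phi op ω a t) ↔ dAccepts op (fun x => {a | ⊥ < ω x a}) a t := by
    intro t
    induction t with
    | leaf x => intro a; rfl
    | node f ts ih =>
      intro a
      simp only [phi, dAccepts]
      constructor
      · intro h i
        exact (ih i _).mp (lt_of_lt_of_le h (Finset.inf_le (Finset.mem_univ i)))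
      · intro h
        exact bot_lt_finset_inf hnt hirr _ _ fun i _ => (ih i _).mpr (h i)
  ext t
  exact (hω t ▸ key t a₀ : (⊥ < Φ t) ↔ _)
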